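/- For a > 0 and λ > 0, ∫₀^∞ (a / (√(2π) · t^{3/2})) · exp(−a²/(2t)) · exp(−λ·t) dt = exp(−a·√(2λ)). -/

import Mathlib

open MeasureTheory Real Set

lemma glasser (b : ℝ) (hb : 0 < b) :
    ∫ x in Ioi (0:ℝ), Real.exp (-(x^2 + b^2/x^2)) = Real.sqrt π / 2 * Real.exp (-(2*b)) := by
  set f : ℝ → ℝ := fun x => Real.exp (-(x - b/x)^2) with hf
  have hderiv : ∀ x ∈ Ioi (0:ℝ),
      HasDerivWithinAt (fun x => x - b/x) (1 + b/x^2) (Ioi 0) x := by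
    intro x hx
    have hx0 : x ≠ 0 := ne_of_gt hx
    have h1 : HasDerivAt (fun x : ℝ => x - b / x)
        (1 - (0 * x - b * 1)/x^2) x :=
      (hasDerivAt_id x).sub (((hasDerivAt_const x b).div (hasDerivAt_id x) hx0))
    have h2 : HasDerivAt (fun x : ℝ => x - b/x) (1 + b/x^2) x := by
      convert h1 using 1
      field_simp
      ring
    exact h2.hasDerivWithinAt
  have hinj : InjOn (fun x : ℝ => x - b/x) (Ioi (0:ℝ)) := by
    have : StrictMonoOn (fun x : ℝ => x - b/x) (Ioi (0:ℝ)) := by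
      intro x hx y hy hxy
      have : b / y < b / x := div_lt_div_of_pos_left hb hx hxy
      simp only
      linarith
    exact this.injOn
  have himg : (fun x : ℝ => x - b/x) '' Ioi (0:ℝ) = univ := by
    apply eq_univ_of_forall
    intro y
    set s := Real.sqrt (y^2 + 4*b) with hs
    have hs2 : s^2 = y^2 + 4*b := Real.sq_sqrt (by nlinarith [sq_nonneg y])
    have hsy : -y < s := by
      nlinarith [Real.sqrt_nonneg (y^2+4*b), sq_nonneg (s+y)]
    have hx0 : (0:ℝ) < (y + s)/2 := by linarith
    refine ⟨(y + s)/2, hx0, ?_⟩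
    have hys : y + s ≠ 0 := by linarith
    field_simp
    nlinarith
  have gauss : ∫ u : ℝ, Real.exp (-u^2) = Real.sqrt π := by
    have := integral_gaussian 1
    simpa using this
  have key := integral_image_eq_integral_abs_deriv_smul measurableSet_Ioi hderiv hinj
      (fun u => Real.exp (-u^2))
  rw [himg, setIntegral_univ] at key
  have habs : ∀ x ∈ Ioi (0:ℝ), |1 + b/x^2| = 1 + b/x^2 := by
    intro x hx
    have hx0 : (0:ℝ) < x := hx
    have hx2 : (0:ℝ) < b / x^2 := div_pos hb (pow_pos hx0 2)
    exact abs_of_pos (by linarith)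
  have hA : ∫ x in Ioi (0:ℝ), (1 + b/x^2) * f x = Real.sqrt π := by
    rw [← gauss, key]
    apply setIntegral_congr_fun measurableSet_Ioi
    intro x hx
    simp [habs x hx, smul_eq_mul, hf]
  have hAint : IntegrableOn (fun x => (1 + b/x^2) * f x) (Ioi (0:ℝ)) := by
    have hInt : IntegrableOn (fun u : ℝ => Real.exp (-u^2))
        ((fun x : ℝ => x - b/x) '' Ioi 0) := by
      rw [himg, integrableOn_univ]
      have := integrable_exp_neg_mul_sq (b := 1) one_pos
      simpa using this
    have := (integrableOn_image_iff_integrableOn_abs_deriv_smul measurableSet_Ioi hderiv hinj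
      (fun u => Real.exp (-u^2))).mp hInt
    apply this.congr_fun ?_ measurableSet_Ioi
    intro x hx
    simp [habs x hx, smul_eq_mul, hf]
  have hcont : ContinuousOn f (Ioi (0:ℝ)) := by
    apply Real.continuous_exp.comp_continuousOn
    exact (((continuousOn_id.sub (continuousOn_const.div continuousOn_id
      fun x hx => ne_of_gt hx)).pow 2).neg)
  have hIf : IntegrableOn f (Ioi (0:ℝ)) := by
    apply Integrable.mono' hAint (hcont.aestronglyMeasurable measurableSet_Ioi)
    filter_upwards [ae_restrict_mem measurableSet_Ioi] with x hx
    have hx0 : (0:ℝ) < x := hx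
    have hx2 : (0:ℝ) < b / x^2 := div_pos hb (pow_pos hx0 2)
    have hfx : 0 < f x := Real.exp_pos _
    rw [Real.norm_eq_abs, abs_of_pos hfx]
    nlinarith [mul_pos hx2 hfx]
  have hg : IntegrableOn (fun x => (b/x^2) * f x) (Ioi (0:ℝ)) := by
    have h := hAint.sub hIf
    apply IntegrableOn.congr_fun h ?_ measurableSet_Ioi
    intro x hx
    simp only [Pi.sub_apply]
    ring
  have hB : ∫ x in Ioi (0:ℝ), (b/x^2) * f x = ∫ x in Ioi (0:ℝ), f x := by
    have hψderiv : ∀ x ∈ Ioi (0:ℝ),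
        HasDerivWithinAt (fun x => b / x) (-(b/x^2)) (Ioi 0) x := by
      intro x hx
      have hx0 : x ≠ 0 := ne_of_gt hx
      have h1 : HasDerivAt (fun x : ℝ => b / x) ((0 * x - b * 1)/x^2) x :=
        (hasDerivAt_const x b).div (hasDerivAt_id x) hx0
      have h2 : HasDerivAt (fun x : ℝ => b / x) (-(b/x^2)) x := by
        convert h1 using 1
        field_simp
        ring
      exact h2.hasDerivWithinAt
    have hψinj : InjOn (fun x : ℝ => b / x) (Ioi (0:ℝ)) := by
      intro x hx y hy hxy
      have hx0 : (0:ℝ) < x := hx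
      have hy0 : (0:ℝ) < y := hy
      simp only at hxy
      field_simp at hxy
      linarith
    have hψimg : (fun x : ℝ => b / x) '' Ioi (0:ℝ) = Ioi 0 := by
      ext y
      constructor
      · rintro ⟨x, hx, rfl⟩
        exact div_pos hb hx
      · intro hy
        have hy0 : (0:ℝ) < y := hy
        refine ⟨b / y, div_pos hb hy0, ?_⟩
        field_simp
    have key2 := integral_image_eq_integral_abs_deriv_smul measurableSet_Ioi hψderiv hψinj f
    rw [hψimg] at key2
    rw [key2]
    apply setIntegral_congr_fun measurableSet_Ioi
    intro x hx
    have hx0 : (0:ℝ) < x := hx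
    have hx0' : x ≠ 0 := ne_of_gt hx0
    have hx2 : (0:ℝ) < b / x^2 := div_pos hb (pow_pos hx0 2)
    have habs2 : |(-(b/x^2))| = b/x^2 := by rw [abs_neg, abs_of_pos hx2]
    have hfb : f (b/x) = f x := by
      simp only [hf]
      congr 1
      have hbx : b / (b / x) = x := by field_simp
      rw [hbx]
      ring
    simp only [smul_eq_mul, habs2, hfb]
  have hsum : Real.sqrt π = 2 * ∫ x in Ioi (0:ℝ), f x := by
    rw [← hA]
    have : ∫ x in Ioi (0:ℝ), (1 + b/x^2) * f x
        = ∫ x in Ioi (0:ℝ), (f x + (b/x^2) * f x) := by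
      apply setIntegral_congr_fun measurableSet_Ioi
      intro x hx
      ring
    rw [this, integral_add hIf hg, hB]
    ring
  have hIffin : ∫ x in Ioi (0:ℝ), f x = Real.sqrt π / 2 := by linarith
  calc ∫ x in Ioi (0:ℝ), Real.exp (-(x^2 + b^2/x^2))
      = ∫ x in Ioi (0:ℝ), Real.exp (-(2*b)) * f x := by
        apply setIntegral_congr_fun measurableSet_Ioi
        intro x hx
        have hx0 : x ≠ 0 := ne_of_gt hx
        simp only [hf]
        rw [← Real.exp_add]
        congr 1
        field_simp
        ring
    _ = Real.exp (-(2*b)) * (Real.sqrt π / 2) := by rw [integral_const_mul, hIffin]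
    _ = Real.sqrt π / 2 * Real.exp (-(2*b)) := by ring

theorem levy_identity (a lam : ℝ) (ha : 0 < a) (hlam : 0 < lam) :
    ∫ t in Ioi (0 : ℝ),
        (a / (Real.sqrt (2 * π) * t ^ ((3:ℝ)/2))) * Real.exp (-a ^ 2 / (2 * t)) *
          Real.exp (-lam * t)
      = Real.exp (-a * Real.sqrt (2 * lam)) := by
  have ha0 : a ≠ 0 := ne_of_gt ha
  set b : ℝ := a * Real.sqrt (2 * lam) / 2 with hbdef
  have hsl : Real.sqrt (2 * lam) > 0 := Real.sqrt_pos.mpr (by linarith)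
  have hb : 0 < b := by positivity
  have hb2 : b^2 = lam * a^2 / 2 := by
    rw [hbdef]
    rw [div_pow, mul_pow, Real.sq_sqrt (by linarith : (0:ℝ) ≤ 2 * lam)]
    ring
  have hderiv : ∀ x ∈ Ioi (0:ℝ),
      HasDerivWithinAt (fun x : ℝ => a^2/(2*x^2)) (-(a^2/x^3)) (Ioi 0) x := by
    intro x hx
    have hx0 : x ≠ 0 := ne_of_gt hx
    have h1 : HasDerivAt (fun x : ℝ => a^2/(2*x^2))
        ((0 * (2*x^2) - a^2 * (2*(↑2 * x^(2-1))))/(2*x^2)^2) x :=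
      (hasDerivAt_const x (a^2)).div ((hasDerivAt_pow 2 x).const_mul 2)
        (by positivity)
    convert h1.hasDerivWithinAt using 1
    rotate_left 2
    field_simp
    ring
    all_goals rfl
  have hinj : InjOn (fun x : ℝ => a^2/(2*x^2)) (Ioi (0:ℝ)) := by
    have : StrictAntiOn (fun x : ℝ => a^2/(2*x^2)) (Ioi (0:ℝ)) := by
      intro x hx y hy hxy
      have hx0 : (0:ℝ) < x := hx
      have hy0 : (0:ℝ) < y := hy
      show a^2/(2*y^2) < a^2/(2*x^2)
      exact div_lt_div_of_pos_left (show (0:ℝ) < a^2 by positivity)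
        (show (0:ℝ) < 2*x^2 by positivity) (show 2*x^2 < 2*y^2 by nlinarith)
    exact this.injOn
  have himg : (fun x : ℝ => a^2/(2*x^2)) '' Ioi (0:ℝ) = Ioi 0 := by
    ext t
    constructor
    · rintro ⟨x, hx, rfl⟩
      have hx0 : (0:ℝ) < x := hx
      show (0:ℝ) < a^2/(2*x^2)
      positivity
    · intro ht
      have ht0 : (0:ℝ) < t := ht
      refine ⟨a / Real.sqrt (2*t), mem_Ioi.mpr (by positivity), ?_⟩
      have h2t : Real.sqrt (2*t) ^ 2 = 2*t := Real.sq_sqrt (by linarith)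
      have hst : Real.sqrt (2*t) ≠ 0 := by positivity
      have hq : (a / Real.sqrt (2*t))^2 = a^2/(2*t) := by rw [div_pow, h2t]
      show a^2/(2*(a / Real.sqrt (2*t))^2) = t
      rw [hq]
      field_simp <;> ring
  have key := integral_image_eq_integral_abs_deriv_smul measurableSet_Ioi hderiv hinj
      (fun t => (a / (Real.sqrt (2 * π) * t ^ ((3:ℝ)/2))) * Real.exp (-a ^ 2 / (2 * t)) *
          Real.exp (-lam * t))
  rw [himg] at key
  rw [key]
  have hmain : ∫ x in Ioi (0:ℝ),
      |(-(a^2/x^3))| • ((a / (Real.sqrt (2 * π) * (a^2/(2*x^2)) ^ ((3:ℝ)/2))) *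
        Real.exp (-a ^ 2 / (2 * (a^2/(2*x^2)))) * Real.exp (-lam * (a^2/(2*x^2))))
      = ∫ x in Ioi (0:ℝ), (2 / Real.sqrt π) * Real.exp (-(x^2 + b^2/x^2)) := by
    apply setIntegral_congr_fun measurableSet_Ioi
    intro x hx
    have hx0 : (0:ℝ) < x := hx
    have hxne : x ≠ 0 := ne_of_gt hx0
    have hs2 : Real.sqrt 2 > 0 := Real.sqrt_pos.mpr (by norm_num)
    have hs2sq : Real.sqrt 2 ^ 2 = 2 := Real.sq_sqrt (by norm_num)
    have hspi : Real.sqrt π > 0 := Real.sqrt_pos.mpr Real.pi_pos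
    have habs : |(-(a^2/x^3))| = a^2/x^3 := by
      rw [abs_neg, abs_of_pos (by positivity)]
    have h1 : (a^2/(2*x^2)) ^ ((3:ℝ)/2) = a^3/(2*Real.sqrt 2*x^3) := by
      have hc : (0:ℝ) ≤ a / (Real.sqrt 2 * x) := by positivity
      have he : a^2/(2*x^2) = (a / (Real.sqrt 2 * x))^2 := by
        rw [div_pow, mul_pow, hs2sq]
      rw [he, ← Real.rpow_natCast (a / (Real.sqrt 2 * x)) 2, ← Real.rpow_mul hc]
      rw [show ((2:ℕ):ℝ) * ((3:ℝ)/2) = ((3:ℕ):ℝ) by norm_num, Real.rpow_natCast]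
      rw [div_pow, mul_pow]
      congr 1
      rw [show Real.sqrt 2 ^ 3 = Real.sqrt 2 ^ 2 * Real.sqrt 2 by ring, hs2sq]
    have h2 : -a ^ 2 / (2 * (a^2/(2*x^2))) = -x^2 := by
      field_simp <;> ring
    have h3 : -lam * (a^2/(2*x^2)) = -(b^2/x^2) := by
      rw [hb2]; field_simp
    have h4 : Real.sqrt (2*π) = Real.sqrt 2 * Real.sqrt π :=
      Real.sqrt_mul (by norm_num) π
    simp only [smul_eq_mul]
    rw [habs, h1, h2, h3, h4]
    rw [show -(x^2 + b^2/x^2) = -x^2 + -(b^2/x^2) by ring, Real.exp_add]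
    rw [show a^2/x^3 * (a / (Real.sqrt 2 * Real.sqrt π * (a^3/(2*Real.sqrt 2*x^3))) *
        Real.exp (-x^2) * Real.exp (-(b^2/x^2)))
      = (a^2/x^3 * (a / (Real.sqrt 2 * Real.sqrt π * (a^3/(2*Real.sqrt 2*x^3)))))
        * (Real.exp (-x^2) * Real.exp (-(b^2/x^2))) by ring]
    congr 1
    field_simp
  rw [hmain, integral_const_mul, glasser b hb]
  have hspi : Real.sqrt π > 0 := Real.sqrt_pos.mpr Real.pi_pos
  rw [show -(2*b) = -a * Real.sqrt (2*lam) by rw [hbdef]; ring]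
  field_simp
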